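/- arXiv:1511.04550 — 4 statements merged into one kernel-verified Lean document; each statement's English description precedes it below -/
import Mathlib

section
/- Let P be a finite nonabelian 2-group containing an element g of order 4 and at least two involutions, and suppose P contains no subgroup isomorphic to C4 × C2. Then the center of P is the cyclic group ⟨g^2⟩ of order 2. -/
/-- `C4 × C2`. -/
abbrev C4xC2 := Multiplicative (ZMod 4) × Multiplicative (ZMod 2)

/-- If a group contains a commuting pair `c, t` with `orderOf c = 4`, `orderOf t = 2` and
`t ≠ c ^ 2`, then it contains a copy of `C4 × C2`. -/
lemma aux_exists_inj {P : Type*} [Group P] (c t : P) (hc : orderOf c = 4)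
    (ht : orderOf t = 2) (hcomm : Commute c t) (hne : t ≠ c ^ 2) :
    ∃ f : C4xC2 →* P, Function.Injective f := by
  have hc4 : c ^ 4 = 1 := by rw [← hc]; exact pow_orderOf_eq_one c
  have ht2 : t ^ 2 = 1 := by rw [← ht]; exact pow_orderOf_eq_one t
  have hmul : ∀ p q : C4xC2,
      (fun p : C4xC2 => c ^ (p.1.toAdd.val) * t ^ (p.2.toAdd.val)) (p * q) =
      (fun p : C4xC2 => c ^ (p.1.toAdd.val) * t ^ (p.2.toAdd.val)) p *
      (fun p : C4xC2 => c ^ (p.1.toAdd.val) * t ^ (p.2.toAdd.val)) q := by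
    rintro ⟨a, b⟩ ⟨a', b'⟩
    simp only [Prod.fst_mul, Prod.snd_mul, toAdd_mul]
    have h1 : (a.toAdd + a'.toAdd).val = (a.toAdd.val + a'.toAdd.val) % 4 := ZMod.val_add _ _
    have h2 : (b.toAdd + b'.toAdd).val = (b.toAdd.val + b'.toAdd.val) % 2 := ZMod.val_add _ _
    have e1 := pow_mod_orderOf c (a.toAdd.val + a'.toAdd.val)
    have e2 := pow_mod_orderOf t (b.toAdd.val + b'.toAdd.val)
    rw [hc] at e1
    rw [ht] at e2
    rw [h1, h2, e1, e2, pow_add, pow_add]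
    have hcm : Commute (c ^ a'.toAdd.val) (t ^ b.toAdd.val) := (hcomm.pow_pow _ _)
    rw [mul_assoc, mul_assoc, ← mul_assoc (c ^ a'.toAdd.val), hcm.eq, mul_assoc]
  refine ⟨MonoidHom.mk'
    (fun p : C4xC2 => c ^ (p.1.toAdd.val) * t ^ (p.2.toAdd.val)) hmul, ?_⟩
  rw [injective_iff_map_eq_one]
  rintro ⟨a, b⟩ h
  simp only [MonoidHom.mk'_apply] at h
  have hA : a.toAdd.val < 4 := ZMod.val_lt _
  have hB : b.toAdd.val < 2 := ZMod.val_lt _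
  have hkey : a.toAdd.val = 0 ∧ b.toAdd.val = 0 := by
    interval_cases hb : b.toAdd.val
    · constructor
      · rw [pow_zero, mul_one] at h
        have := orderOf_dvd_of_pow_eq_one h
        rw [hc] at this
        omega
      · rfl
    · exfalso
      rw [pow_one] at h
      have htc : t = (c ^ a.toAdd.val)⁻¹ := (inv_eq_of_mul_eq_one_right h).symm
      interval_cases ha : a.toAdd.val
      · simp at htc
        rw [htc] at ht; simp at ht
      · rw [pow_one] at htc
        have : orderOf t = orderOf c := by rw [htc, orderOf_inv]
        omega
      · apply hne
        have h2 : (c ^ 2)⁻¹ = c ^ 2 := by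
          rw [inv_eq_iff_mul_eq_one, ← pow_add]; exact hc4
        rw [htc, h2]
      · have h3 : (c ^ 3)⁻¹ = c := by
          rw [inv_eq_iff_mul_eq_one, ← pow_succ]; exact hc4
        rw [htc, h3] at ht; omega
  obtain ⟨h1, h2⟩ := hkey
  have ha : a = 1 := by
    have : a.toAdd = 0 := (ZMod.val_eq_zero _).mp h1
    simpa using congrArg Multiplicative.ofAdd this
  have hb : b = 1 := by
    have : b.toAdd = 0 := (ZMod.val_eq_zero _).mp h2
    simpa using congrArg Multiplicative.ofAdd this
  rw [ha, hb]; rfl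

/-- In a group, if `orderOf a = 2 ^ m` and `j ≤ m`, then `a ^ (2 ^ (m - j))` has order `2 ^ j`. -/
lemma aux_pow_order {P : Type*} [Group P] [Finite P] (a : P) (m j : ℕ) (hj : j ≤ m)
    (h : orderOf a = 2 ^ m) : orderOf (a ^ (2 ^ (m - j))) = 2 ^ j := by
  rw [orderOf_pow, h, Nat.gcd_eq_right (pow_dvd_pow 2 (Nat.sub_le m j)),
    Nat.pow_div (Nat.sub_le m j) (by norm_num)]
  congr 1
  omega

/-- Let `P` be a finite nonabelian 2-group containing an element `g` of order 4 and at least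
two involutions, with no subgroup isomorphic to `C4 × C2`. Then `Z(P) = ⟨g²⟩` is cyclic of
order 2. -/
theorem center_eq_of_no_C4xC2 (P : Type*) [Group P] [Finite P]
    (hP : IsPGroup 2 P) (hnab : ∃ x y : P, x * y ≠ y * x)
    (g : P) (hg : orderOf g = 4)
    (x y : P) (hx : orderOf x = 2) (hy : orderOf y = 2) (hxy : x ≠ y)
    (hno : ¬ ∃ f : C4xC2 →* P, Function.Injective f) :
    Subgroup.center P = Subgroup.zpowers (g ^ 2) ∧ orderOf (g ^ 2) = 2 := by
  have hp2 : Fact (Nat.Prime 2) := ⟨Nat.prime_two⟩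
  have hg2 : orderOf (g ^ 2) = 2 := by
    rw [orderOf_pow, hg]; decide
  -- order of any element is a power of 2
  have hord : ∀ s : P, ∃ m : ℕ, orderOf s = 2 ^ m := by
    intro s
    obtain ⟨k, hk⟩ := hP s
    obtain ⟨m, _, hm⟩ := (Nat.dvd_prime_pow Nat.prime_two).mp (orderOf_dvd_of_pow_eq_one hk)
    exact ⟨m, hm⟩
  -- every central involution equals g ^ 2
  have hcent2 : ∀ s : P, s ∈ Subgroup.center P → orderOf s = 2 → s = g ^ 2 := by
    intro s hs hso
    by_contra hne
    exact hno (aux_exists_inj g s hg hso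
      (Subgroup.mem_center_iff.mp hs g) hne)
  -- the center is nontrivial, so it contains an involution, which must be g ^ 2
  have hnt : Nontrivial P := ⟨g, 1, by rintro rfl; simp at hg⟩
  have hcnt : Nontrivial (Subgroup.center P) := hP.center_nontrivial
  obtain ⟨⟨z, hzc⟩, hz1⟩ := exists_ne (1 : Subgroup.center P)
  have hzne : z ≠ 1 := fun h => hz1 (Subtype.ext h)
  obtain ⟨m, hm⟩ := hord z
  have hm1 : 1 ≤ m := by
    by_contra h
    have : m = 0 := by omega
    rw [this] at hm; simp at hm
    exact hzne hm
  -- z ^ (2 ^ (m - 1)) is a central involution, hence equals g ^ 2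
  have hzpow : orderOf (z ^ (2 ^ (m - 1))) = 2 := by
    simpa using aux_pow_order z m 1 hm1 hm
  have hzpc : z ^ (2 ^ (m - 1)) ∈ Subgroup.center P := Subgroup.pow_mem _ hzc _
  have hg2c : g ^ 2 ∈ Subgroup.center P := by
    rw [← hcent2 _ hzpc hzpow]; exact hzpc
  -- an involution among x, y different from g ^ 2
  obtain ⟨w, hw, hwne⟩ : ∃ w : P, orderOf w = 2 ∧ w ≠ g ^ 2 := by
    rcases eq_or_ne x (g ^ 2) with h | h
    · exact ⟨y, hy, by rw [← h]; exact fun hh => hxy hh.symm⟩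
    · exact ⟨x, hx, h⟩
  -- center ≤ zpowers (g ^ 2)
  constructor
  · apply le_antisymm
    · intro s hs
      obtain ⟨k, hk⟩ := hord s
      rcases Nat.lt_or_ge k 2 with hk2 | hk2
      · interval_cases k
        · simp at hk
          rw [hk]; exact Subgroup.one_mem _
        · rw [hcent2 s hs (by simpa using hk)]
          exact Subgroup.mem_zpowers _
      · exfalso
        -- s ^ (2 ^ (k - 2)) is a central element of order 4
        set d := s ^ (2 ^ (k - 2)) with hd
        have hdo : orderOf d = 4 := by
          have := aux_pow_order s k 2 hk2 hk
          simpa using this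
        have hdc : d ∈ Subgroup.center P := Subgroup.pow_mem _ hs _
        have hd2 : orderOf (d ^ 2) = 2 := by rw [orderOf_pow, hdo]; decide
        have hd2c : d ^ 2 ∈ Subgroup.center P := Subgroup.pow_mem _ hdc _
        have : d ^ 2 = g ^ 2 := hcent2 _ hd2c hd2
        exact hno (aux_exists_inj d w hdo hw
          ((Subgroup.mem_center_iff.mp hdc w : Commute w d).symm) (by rw [this]; exact hwne))
    · rw [Subgroup.zpowers_le]
      exact hg2c
  · exact hg2
end

section
/- Let P be a finite 2-group with central element g of order 4 such that Z(P) = ⟨g^2⟩, and let a be an involution of P not in the center with the property that a and g generate no subgroup isomorphic to C4 × C2. If a^g · a commutes with g, then a^g = a·g^2. -/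
/-- Hom from `Multiplicative (ZMod n)` sending the generator to `g`, given `g ^ n = 1`. -/
noncomputable def cycHom {P : Type*} [Group P] (n : ℕ) (g : P) (h : g ^ (n : ℤ) = 1) :
    Multiplicative (ZMod n) →* P :=
  AddMonoidHom.toMultiplicativeLeft
    (ZMod.lift n ⟨zmultiplesHom (Additive P) (Additive.ofMul g), by
      show (n : ℤ) • Additive.ofMul g = 0
      rw [← ofMul_zpow, h, ofMul_one]⟩)

lemma cycHom_apply {P : Type*} [Group P] (n : ℕ) (g : P) (h : g ^ (n : ℤ) = 1) (k : ℤ) :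
    cycHom n g h (Multiplicative.ofAdd ((k : ℤ) : ZMod n)) = g ^ k := by
  simp [cycHom]

lemma cycHom_apply' {P : Type*} [Group P] (n : ℕ) [NeZero n] (g : P) (h : g ^ (n : ℤ) = 1)
    (x : Multiplicative (ZMod n)) :
    cycHom n g h x = g ^ ((Multiplicative.toAdd x).val : ℤ) := by
  have hx : x = Multiplicative.ofAdd (((Multiplicative.toAdd x).val : ℤ) : ZMod n) := by
    simp [ZMod.natCast_val, ZMod.intCast_cast]
  rw [hx, cycHom_apply]
  simp

/-- If `g` has order `4` and `z` is an involution commuting with `g` outside `⟨g⟩`,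
with both in the closure of `S`, then we get an injective `C4 × C2 → P` into that closure. -/
lemma exists_C4xC2 {P : Type*} [Group P] (g z : P) (hg : orderOf g = 4)
    (hz2 : z ^ 2 = 1) (hcz : Commute g z) (hzg : z ∉ Subgroup.zpowers g)
    (S : Set P) (hgS : g ∈ Subgroup.closure S) (hzS : z ∈ Subgroup.closure S) :
    ∃ f : C4xC2 →* P, Function.Injective f ∧ f.range ≤ Subgroup.closure S := by
  have hg4 : g ^ ((4 : ℕ) : ℤ) = 1 := by
    rw [← hg]; exact_mod_cast pow_orderOf_eq_one g
  have hz2' : z ^ ((2 : ℕ) : ℤ) = 1 := by exact_mod_cast hz2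
  set f1 := cycHom 4 g hg4
  set f2 := cycHom 2 z hz2'
  have hcomm : ∀ m n, Commute (f1 m) (f2 n) := by
    intro m n
    rw [cycHom_apply', cycHom_apply']
    exact (hcz.zpow_zpow _ _)
  refine ⟨f1.noncommCoprod f2 hcomm, ?_, ?_⟩
  · rw [injective_iff_map_eq_one]
    rintro ⟨x, y⟩ hxy
    have hxy' : g ^ ((Multiplicative.toAdd x).val : ℤ) * z ^ ((Multiplicative.toAdd y).val : ℤ)
        = 1 := by
      rw [← cycHom_apply' 4 g hg4 x, ← cycHom_apply' 2 z hz2' y]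
      exact hxy
    set i := (Multiplicative.toAdd x).val with hi
    set j := (Multiplicative.toAdd y).val with hj
    have hjlt : j < 2 := ZMod.val_lt _
    interval_cases j
    · -- j = 0
      rw [Int.natCast_zero, zpow_zero, mul_one] at hxy'
      have : ((4:ℕ) : ℤ) ∣ (i : ℤ) := by
        rw [← hg]; exact orderOf_dvd_iff_zpow_eq_one.mpr hxy'
      have hi4 : (4:ℕ) ∣ i := by exact_mod_cast this
      have hilt : i < 4 := ZMod.val_lt _
      have hi0 : i = 0 := Nat.eq_zero_of_dvd_of_lt hi4 hilt
      have hx : x = 1 := by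
        have : (Multiplicative.toAdd x) = 0 := by
          rwa [← ZMod.val_eq_zero, ← hi]
        simpa using this
      have hy : y = 1 := by
        have : (Multiplicative.toAdd y) = 0 := by
          rw [← ZMod.val_eq_zero, ← hj]
        simpa using this
      simp [hx, hy, Prod.ext_iff]
    · -- j = 1
      exfalso
      apply hzg
      rw [Int.natCast_one, zpow_one] at hxy'
      have : z = (g ^ ((i : ℕ) : ℤ))⁻¹ := by
        rw [eq_inv_iff_mul_eq_one]
        rw [(hcz.zpow_left _).eq] at hxy'
        exact hxy'
      rw [this]
      exact Subgroup.inv_mem _ (Subgroup.zpow_mem _ (Subgroup.mem_zpowers g) _)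
  · rintro _ ⟨⟨x, y⟩, rfl⟩
    have : (f1.noncommCoprod f2 hcomm) (x, y) = f1 x * f2 y := rfl
    rw [this, cycHom_apply', cycHom_apply']
    exact mul_mem (Subgroup.zpow_mem _ hgS _) (Subgroup.zpow_mem _ hzS _)

/-- Let `P` be a finite 2-group with an element `g` of order 4 such that `Z(P) = ⟨g²⟩`, and
let `a` be a noncentral involution of `P` such that `a` and `g` generate no subgroup
isomorphic to `C4 × C2`. If `aᵍ · a` commutes with `g`, then `aᵍ = a g²`. -/
theorem conj_involution_eq (P : Type*) [Group P] [Finite P]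
    (hP : IsPGroup 2 P) (g a : P) (hg : orderOf g = 4)
    (hZ : Subgroup.center P = Subgroup.zpowers (g ^ 2))
    (ha : orderOf a = 2) (hanc : a ∉ Subgroup.center P)
    (hno : ¬ ∃ f : C4xC2 →* P,
      Function.Injective f ∧ f.range ≤ Subgroup.closure {a, g})
    (hcomm : Commute (g⁻¹ * a * g * a) g) :
    g⁻¹ * a * g = a * g ^ 2 := by
  have ha2 : a * a = 1 := by
    have := pow_orderOf_eq_one a; rwa [ha, pow_two] at this
  have hainv : a⁻¹ = a := by
    rw [inv_eq_iff_mul_eq_one]; exact ha2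
  have hg4 : g ^ 4 = 1 := by rw [← hg]; exact pow_orderOf_eq_one g
  -- g ^ 2 is central
  have hcen : ∀ x : P, x * g ^ 2 = g ^ 2 * x := by
    intro x
    have : g ^ 2 ∈ Subgroup.center P := hZ ▸ Subgroup.mem_zpowers _
    exact Subgroup.mem_center_iff.mp this x
  set c := g⁻¹ * a * g * a with hc
  have hca : Commute a (g * g) := by have := hcen a; rwa [pow_two] at this
  have key : g⁻¹ * g⁻¹ * a = a * (g⁻¹ * g⁻¹) := by
    have := hca.inv_right.eq.symm
    rwa [mul_inv_rev] at this
  -- conjugation by g inverts c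
  have hconj : g⁻¹ * c * g = c⁻¹ := by
    calc g⁻¹ * c * g = (g⁻¹ * g⁻¹ * a) * (g * a * g) := by rw [hc]; group
    _ = (a * (g⁻¹ * g⁻¹)) * (g * a * g) := by rw [key]
    _ = a * g⁻¹ * (a * g) := by group
    _ = c⁻¹ := by rw [hc]; simp only [mul_inv_rev, hainv, inv_inv]; group
  have h5 : g⁻¹ * c * g = c := by
    rw [mul_assoc, hcomm.eq, ← mul_assoc, inv_mul_cancel, one_mul]
  have h6 : c⁻¹ = c := by rw [← hconj, h5]
  have hcc : c * c = 1 := by nth_rewrite 1 [← h6]; exact inv_mul_cancel c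
  by_cases hcg2 : c = g ^ 2
  · have hx : g⁻¹ * a * g * a = g ^ 2 := hcg2
    calc g⁻¹ * a * g = (g⁻¹ * a * g * a) * a⁻¹ := by group
    _ = g ^ 2 * a⁻¹ := by rw [hx]
    _ = g ^ 2 * a := by rw [hainv]
    _ = a * g ^ 2 := (hcen a).symm
  · exfalso
    apply hno
    have hgcl : g ∈ Subgroup.closure ({a, g} : Set P) :=
      Subgroup.subset_closure (by simp)
    have hacl : a ∈ Subgroup.closure ({a, g} : Set P) :=
      Subgroup.subset_closure (by simp)
    -- any element of ⟨g⟩ with square 1 is 1 or g²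
    have hsq : ∀ x : P, x ∈ Subgroup.zpowers g → x * x = 1 → x = 1 ∨ x = g ^ 2 := by
      rintro x ⟨k, rfl⟩ hx
      rw [← zpow_add] at hx
      have hdvd : ((orderOf g : ℕ) : ℤ) ∣ k + k := orderOf_dvd_iff_zpow_eq_one.mpr hx
      rw [hg] at hdvd
      have h2k : (2 : ℤ) ∣ k := by omega
      obtain ⟨m, rfl⟩ := h2k
      rcases Int.even_or_odd m with ⟨q, rfl⟩ | ⟨q, rfl⟩
      · left
        refine orderOf_dvd_iff_zpow_eq_one.mp ?_
        rw [hg]; exact ⟨q, by push_cast; ring⟩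
      · right
        show g ^ ((2:ℤ) * (2 * q + 1)) = g ^ 2
        have h1 : g ^ ((4:ℤ) * q) = 1 := by
          refine orderOf_dvd_iff_zpow_eq_one.mp ?_
          rw [hg]; exact ⟨q, by push_cast; ring⟩
        have h2 : g ^ ((2:ℤ) * (2 * q + 1)) = g ^ ((4:ℤ) * q) * g ^ (2:ℤ) := by
          rw [← zpow_add]; congr 1; ring
        rw [h2, h1, one_mul, zpow_two, pow_two]
    by_cases hc1 : c = 1
    · -- a commutes with g; use z = a
      have hfix : g⁻¹ * a * g = a := by
        have h7 : g⁻¹ * a * g * a * a = 1 * a := by rw [← hc, hc1]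
        rwa [mul_assoc (g⁻¹ * a * g), ha2, mul_one, one_mul] at h7
      have hag : Commute g a := by
        have := congrArg (fun x => g * x) hfix
        simp only [← mul_assoc, mul_inv_cancel, one_mul] at this
        exact this.symm
      have hag' : a ∉ Subgroup.zpowers g := by
        intro hmem
        rcases hsq a hmem ha2 with h | h
        · rw [h] at ha; simp at ha
        · apply hanc; rw [hZ, h]; exact Subgroup.mem_zpowers _
      exact exists_C4xC2 g a hg (by rw [pow_two]; exact ha2) hag hag' _ hgcl hacl
    · -- use z = c
      have hcg : Commute g c := hcomm.symm
      have hccl : c ∈ Subgroup.closure ({a, g} : Set P) := by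
        rw [hc]
        exact mul_mem (mul_mem (mul_mem (inv_mem hgcl) hacl) hgcl) hacl
      have hcng : c ∉ Subgroup.zpowers g := by
        intro hmem
        rcases hsq c hmem hcc with h | h
        · exact hc1 h
        · exact hcg2 h
      exact exists_C4xC2 g c hg (by rw [pow_two]; exact hcc) hcg hcng _ hgcl hccl
end

section
/- Let r be an odd prime power, q = r^2, and let α be an element of maximal 2-power order in the multiplicative group F_q^×. Let σ: F_q → F_q be the Frobenius automorphism x ↦ x^r. Then σ(α) = -α^{-1} if r ≡ 3 (mod 4), and σ(α) = -α if r ≡ 1 (mod 4). -/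
/-- Let `r` be an odd prime power, `F` the field with `q = r^2` elements, `α` an element of
maximal 2-power order in `Fˣ`, and `σ : x ↦ x^r` the Frobenius. Then `σ(α) = -α⁻¹` if
`r ≡ 3 (mod 4)` and `σ(α) = -α` if `r ≡ 1 (mod 4)`. -/
theorem frobenius_of_max_two_power_order (F : Type*) [Field F] [Fintype F]
    (r : ℕ) (hr : Odd r) (hpp : IsPrimePow r) (hcard : Fintype.card F = r ^ 2)
    (α : Fˣ) (hα : orderOf α = 2 ^ ((Fintype.card F - 1).factorization 2)) :
    (r % 4 = 3 → (α : F) ^ r = -((α⁻¹ : Fˣ) : F)) ∧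
      (r % 4 = 1 → (α : F) ^ r = -(α : F)) := by
  have hr2 : 2 ≤ r := hpp.two_le
  have hr3 : 3 ≤ r := by rcases hr with ⟨t, ht⟩; omega
  have h1 : r - 1 ≠ 0 := by omega
  have h2 : r + 1 ≠ 0 := by omega
  have hmul : r ^ 2 - 1 = (r - 1) * (r + 1) := by
    have h : (r - 1) * (r + 1) + 1 = r ^ 2 := by
      obtain ⟨s, rfl⟩ : ∃ s, r = s + 2 := ⟨r - 2, by omega⟩
      have : s + 2 - 1 = s + 1 := by omega
      rw [this]; ring
    omega
  set n := (Fintype.card F - 1).factorization 2 with hn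
  have hn' : n = (r - 1).factorization 2 + (r + 1).factorization 2 := by
    rw [hn, hcard, hmul, Nat.factorization_mul h1 h2]
    simp
  have horder : orderOf α = 2 ^ n := hα
  -- key: for n = k + 1, α ^ 2^k = -1
  have hneg : ∀ k, n = k + 1 → (α : F) ^ 2 ^ k = -1 := by
    intro k hk
    have hsq : ((α : F) ^ 2 ^ k) * ((α : F) ^ 2 ^ k) = 1 := by
      rw [← pow_add]
      have h' : 2 ^ k + 2 ^ k = 2 ^ n := by rw [hk]; ring
      rw [h', ← horder, ← Units.val_pow_eq_pow_val, pow_orderOf_eq_one, Units.val_one]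
    have hne : (α : F) ^ 2 ^ k ≠ 1 := by
      intro h
      have hu : α ^ 2 ^ k = 1 := Units.ext (by simpa using h)
      have hdvd := orderOf_dvd_of_pow_eq_one hu
      rw [horder, hk] at hdvd
      have hle := Nat.le_of_dvd (by positivity) hdvd
      have : (2:ℕ) ^ k < 2 ^ (k + 1) := Nat.pow_lt_pow_right one_lt_two (by omega)
      omega
    rcases mul_self_eq_one_iff.mp hsq with h | h
    · exact absurd h hne
    · exact h
  -- factorization of 2 * odd is 1
  have hfact2 : ∀ t : ℕ, (2 * (2 * t + 1)).factorization 2 = 1 := by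
    intro t
    rw [Nat.factorization_mul (by norm_num) (by omega)]
    have hodd : (2 * t + 1).factorization 2 = 0 :=
      Nat.factorization_eq_zero_of_not_dvd (by omega)
    simp [hodd, Nat.Prime.factorization_self Nat.prime_two]
  constructor
  · intro h3
    obtain ⟨t, rfl⟩ : ∃ t, r = 4 * t + 3 := ⟨r / 4, by omega⟩
    have hrm : (4 * t + 3) - 1 = 2 * (2 * t + 1) := by omega
    have hf1 : ((4 * t + 3) - 1).factorization 2 = 1 := by rw [hrm]; exact hfact2 t
    set k := (4 * t + 3 + 1).factorization 2 with hkdef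
    have hnk : n = k + 1 := by omega
    set m := (4 * t + 3 + 1) / 2 ^ k with hm
    have hrp : 4 * t + 3 + 1 = 2 ^ k * m :=
      (Nat.ordProj_mul_ordCompl_eq_self (4 * t + 3 + 1) 2).symm
    have hmodd : ¬ 2 ∣ m := Nat.not_dvd_ordCompl Nat.prime_two (by omega)
    have hmodd' : Odd m := Nat.odd_iff.mpr (by omega)
    have key : (α : F) ^ (4 * t + 3 + 1) = -1 := by
      rw [hrp, pow_mul, hneg k hnk, hmodd'.neg_one_pow]
    have hα0 : (α : F) ≠ 0 := α.ne_zero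
    have hmain : (α : F) ^ (4 * t + 3) * (α : F) = -1 := by
      rw [← pow_succ]; exact key
    rw [Units.val_inv_eq_inv_val]
    field_simp
    linear_combination hmain
  · intro h1'
    obtain ⟨t, rfl⟩ : ∃ t, r = 4 * t + 1 := ⟨r / 4, by omega⟩
    have hrp : (4 * t + 1) + 1 = 2 * (2 * t + 1) := by omega
    have hf1 : ((4 * t + 1) + 1).factorization 2 = 1 := by rw [hrp]; exact hfact2 t
    set k := (4 * t + 1 - 1).factorization 2 with hkdef
    have hnk : n = k + 1 := by omega
    set m := (4 * t + 1 - 1) / 2 ^ k with hm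
    have hrm : 4 * t + 1 - 1 = 2 ^ k * m :=
      (Nat.ordProj_mul_ordCompl_eq_self (4 * t + 1 - 1) 2).symm
    have hmodd : ¬ 2 ∣ m := Nat.not_dvd_ordCompl Nat.prime_two (by omega)
    have hmodd' : Odd m := Nat.odd_iff.mpr (by omega)
    have key : (α : F) ^ (4 * t + 1 - 1) = -1 := by
      rw [hrm, pow_mul, hneg k hnk, hmodd'.neg_one_pow]
    have h' : (α : F) ^ (4 * t + 1) = (α : F) ^ (4 * t + 1 - 1) * (α : F) := by
      rw [← pow_succ]; congr 1
    rw [h', key]; ring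
end

section
/- Let q be an odd prime power with q a square, q = r^2, σ the Frobenius x ↦ x^r on F_q, and α an element of maximal 2-power order in F_q^×. Define g = diag(1, α) if r ≡ 3 (mod 4). Then the map φ: PSL(2, q) → PSL(2, q) given by first applying σ entrywise and then conjugating by the image of g is an automorphism of PSL(2, q) of order 4 whose square is the inner automorphism given by the image of diag(i, -i), where i ∈ F_q is a primitive 4th root of unity. -/
open Matrix
open scoped MatrixGroups

/-- The matrix `g = diag(1, α)`. -/
def gMat (F : Type*) [Field F] (α : Fˣ) : Matrix (Fin 2) (Fin 2) F := !![1, 0; 0, (α : F)]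

/-- The inverse matrix `g⁻¹ = diag(1, α⁻¹)`. -/
def gMatInv (F : Type*) [Field F] (α : Fˣ) : Matrix (Fin 2) (Fin 2) F :=
  !![1, 0; 0, ((α⁻¹ : Fˣ) : F)]

/-- The map `A ↦ g (σ A) g⁻¹` on `SL(2, F)`, with `g = diag(1, α)`: first apply the field
homomorphism `σ` entrywise, then conjugate by `g`. -/
def conjFrobSL (F : Type*) [Field F] (σ : F →+* F) (α : Fˣ)
    (A : Matrix.SpecialLinearGroup (Fin 2) F) : Matrix.SpecialLinearGroup (Fin 2) F :=
  ⟨gMat F α * (A : Matrix (Fin 2) (Fin 2) F).map σ * gMatInv F α, by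
    have hdet : ((A : Matrix (Fin 2) (Fin 2) F).map σ).det = 1 := by
      rw [show ((A : Matrix (Fin 2) (Fin 2) F).map σ)
            = σ.mapMatrix (A : Matrix (Fin 2) (Fin 2) F) from rfl,
        ← RingHom.map_det, A.2, _root_.map_one]
    rw [Matrix.det_mul, Matrix.det_mul, hdet, mul_one]
    simp [gMat, gMatInv, Matrix.det_fin_two_of, ← Units.val_mul]⟩

/-- The matrix `diag(i, -i)` as an element of `SL(2, F)`, where `i² = -1`. -/
def diagI (F : Type*) [Field F] (i : F) (hi : i * i = -1) :
    Matrix.SpecialLinearGroup (Fin 2) F :=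
  ⟨!![i, 0; 0, -i], by simp [Matrix.det_fin_two_of, mul_neg, hi]⟩

section Aux

variable {F : Type*} [Field F] (σ : F →+* F) (α : Fˣ)

lemma hGIG : gMatInv F α * gMat F α = 1 := by
  simp [gMat, gMatInv, Matrix.mul_fin_two, ← Matrix.one_fin_two]

lemma hGGI : gMat F α * gMatInv F α = 1 := by
  simp [gMat, gMatInv, Matrix.mul_fin_two, ← Matrix.one_fin_two]

lemma conj_entries (A : Matrix (Fin 2) (Fin 2) F) :
    gMat F α * A.map σ * gMatInv F α =
    !![σ (A 0 0), σ (A 0 1) * ((α:F))⁻¹; (α:F) * σ (A 1 0), σ (A 1 1)] := by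
  rw [Matrix.eta_fin_two (A.map σ)]
  simp [gMat, gMatInv, Matrix.mul_fin_two, Matrix.map_apply]
  field_simp

/-- `conjFrobSL` as a monoid hom on `SL(2,F)`. -/
def Phi : SL(2, F) →* SL(2, F) where
  toFun := conjFrobSL F σ α
  map_one' := Subtype.ext <| by
    show gMat F α * (1 : Matrix (Fin 2) (Fin 2) F).map σ * gMatInv F α = 1
    rw [Matrix.map_one σ (map_zero σ) (map_one σ), mul_one, hGGI]
  map_mul' A B := Subtype.ext <| by
    show gMat F α * ((A * B : SL(2,F)) : Matrix (Fin 2) (Fin 2) F).map σ * gMatInv F α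
        = (gMat F α * (A : Matrix (Fin 2) (Fin 2) F).map σ * gMatInv F α) *
          (gMat F α * (B : Matrix (Fin 2) (Fin 2) F).map σ * gMatInv F α)
    rw [Matrix.SpecialLinearGroup.coe_mul, Matrix.map_mul]
    calc gMat F α * ((A:Matrix (Fin 2) (Fin 2) F).map σ * (B:Matrix (Fin 2) (Fin 2) F).map σ)
          * gMatInv F α
        = gMat F α * (A:Matrix (Fin 2) (Fin 2) F).map σ * (gMatInv F α * gMat F α)
            * (B:Matrix (Fin 2) (Fin 2) F).map σ * gMatInv F α := by rw [hGIG]; noncomm_ring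
      _ = _ := by noncomm_ring

lemma Phi_sq (hσσ : ∀ x, σ (σ x) = x) (hneg : σ (α:F) * (α:F) = -1)
    (i : F) (hi : i * i = -1) (A : SL(2, F)) :
    Phi σ α (Phi σ α A) = diagI F i hi * A * (diagI F i hi)⁻¹ := by
  have hneg' : (σ (α:F))⁻¹ * ((α:F))⁻¹ = -1 := by
    rw [← mul_inv, hneg, inv_neg, inv_one]
  apply Subtype.ext
  show gMat F α * ((Phi σ α A : Matrix (Fin 2) (Fin 2) F)).map σ * gMatInv F α = _
  rw [Matrix.SpecialLinearGroup.coe_mul, Matrix.SpecialLinearGroup.coe_mul,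
    Matrix.SpecialLinearGroup.coe_inv]
  have h1 : (Phi σ α A : Matrix (Fin 2) (Fin 2) F) =
      !![σ (A 0 0), σ (A 0 1) * ((α:F))⁻¹; (α:F) * σ (A 1 0), σ (A 1 1)] :=
    conj_entries σ α _
  rw [h1, conj_entries]
  rw [Matrix.eta_fin_two (A : Matrix (Fin 2) (Fin 2) F)]
  show _ = !![i,0;0,-i] * _ * adjugate !![i,0;0,-i]
  rw [Matrix.adjugate_fin_two]
  ext a b
  fin_cases a <;> fin_cases b <;>
    simp [Matrix.mul_fin_two, _root_.map_mul, hσσ, map_inv₀] <;>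
    first
    | linear_combination ((A : Matrix (Fin 2) (Fin 2) F) 0 0) * hi
    | linear_combination ((A : Matrix (Fin 2) (Fin 2) F) 0 1) * hneg'
        - ((A : Matrix (Fin 2) (Fin 2) F) 0 1) * hi
    | linear_combination ((A : Matrix (Fin 2) (Fin 2) F) 1 0) * hneg
        - ((A : Matrix (Fin 2) (Fin 2) F) 1 0) * hi
    | linear_combination ((A : Matrix (Fin 2) (Fin 2) F) 1 1) * hi

lemma Phi_center (x : SL(2, F)) (hx : x ∈ Subgroup.center (SL(2, F))) :
    Phi σ α x ∈ Subgroup.center (SL(2, F)) := by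
  obtain ⟨t, ht, hts⟩ := Matrix.SpecialLinearGroup.mem_center_iff.mp hx
  refine Matrix.SpecialLinearGroup.mem_center_iff.mpr ⟨σ t, ?_, ?_⟩
  · rw [← map_pow]
    simp only [Fintype.card_fin] at ht ⊢
    rw [ht, _root_.map_one]
  · have h1 : (Phi σ α x : Matrix (Fin 2) (Fin 2) F) =
        !![σ (x 0 0), σ (x 0 1) * ((α:F))⁻¹; (α:F) * σ (x 1 0), σ (x 1 1)] :=
      conj_entries σ α _
    have h00 : (x : Matrix (Fin 2) (Fin 2) F) 0 0 = t := by
      rw [← hts]; simp [Matrix.scalar_apply]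
    have h11 : (x : Matrix (Fin 2) (Fin 2) F) 1 1 = t := by
      rw [← hts]; simp [Matrix.scalar_apply]
    have h01 : (x : Matrix (Fin 2) (Fin 2) F) 0 1 = 0 := by
      rw [← hts]; simp [Matrix.scalar_apply, Matrix.diagonal_apply_ne]
    have h10 : (x : Matrix (Fin 2) (Fin 2) F) 1 0 = 0 := by
      rw [← hts]; simp [Matrix.scalar_apply, Matrix.diagonal_apply_ne]
    rw [h1, h00, h11, h01, h10, map_zero]
    ext a b
    fin_cases a <;> fin_cases b <;> simp [Matrix.scalar_apply, Matrix.diagonal_apply_ne]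

end Aux

/-- Let `q = r^2` be the square of an odd prime power with `r ≡ 3 (mod 4)`, `F` the field with
`q` elements, `σ : x ↦ x^r` the Frobenius, `α` of maximal 2-power order in `Fˣ`, and
`g = diag(1, α)`. Then the map on `PSL(2, F)` induced by `A ↦ g (σ A) g⁻¹` is an
automorphism of order 4 whose square is the inner automorphism given by the image of
`diag(i, -i)`, where `i² = -1`. -/
theorem psl_frob_conj_aut (F : Type*) [Field F] [Fintype F]
    (r : ℕ) (hr : Odd r) (hpp : IsPrimePow r) (hr4 : r % 4 = 3)
    (hcard : Fintype.card F = r ^ 2)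
    (σ : F →+* F) (hσ : ∀ x : F, σ x = x ^ r)
    (α : Fˣ) (hα : orderOf α = 2 ^ ((Fintype.card F - 1).factorization 2))
    (i : F) (hi : i * i = -1) :
    ∃ e : MulAut (Matrix.ProjectiveSpecialLinearGroup (Fin 2) F),
      (∀ A : Matrix.SpecialLinearGroup (Fin 2) F,
          e (QuotientGroup.mk A) = QuotientGroup.mk (conjFrobSL F σ α A)) ∧
      orderOf e = 4 ∧
      (∀ x : Matrix.ProjectiveSpecialLinearGroup (Fin 2) F,
          (e * e) x = (QuotientGroup.mk (diagI F i hi)) * x *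
            (QuotientGroup.mk (diagI F i hi))⁻¹) := by
  -- Number theory: α ^ (r+1) = -1
  have hr3 : 3 ≤ r := by omega
  have hq1 : Fintype.card F - 1 = (r - 1) * (r + 1) := by
    rw [hcard]
    have h : (r - 1) * (r + 1) + 1 = r ^ 2 := by
      obtain ⟨s, rfl⟩ : ∃ s, r = s + 3 := ⟨r - 3, by omega⟩
      show (s + 3 - 1) * (s + 3 + 1) + 1 = (s + 3) ^ 2
      simp only [show s + 3 - 1 = s + 2 from rfl]
      ring
    exact Nat.sub_eq_of_eq_add h.symm
  set w := (r + 1).factorization 2 with hwdef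
  have hw1 : (r - 1).factorization 2 = 1 := by
    obtain ⟨m, hm1, hm2⟩ : ∃ m, r - 1 = 2 * m ∧ m % 2 = 1 := ⟨(r - 1) / 2, by omega, by omega⟩
    rw [hm1, Nat.factorization_mul two_ne_zero (by omega), Finsupp.add_apply,
      Nat.Prime.factorization_self Nat.prime_two,
      Nat.factorization_eq_zero_of_not_dvd (by omega)]
  have hv : (Fintype.card F - 1).factorization 2 = w + 1 := by
    rw [hq1, Nat.factorization_mul (by omega) (by omega), Finsupp.add_apply, hw1]
    omega
  have hα' : orderOf α = 2 ^ (w + 1) := by rw [hα, hv]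
  have h2w : 2 ^ w ∣ r + 1 := Nat.ordProj_dvd (r + 1) 2
  have hnd : ¬ 2 ^ (w + 1) ∣ r + 1 := fun h => by
    have := (Nat.Prime.pow_dvd_iff_le_factorization Nat.prime_two (by omega)).mp h
    omega
  have hβ2 : (α ^ (r + 1)) ^ 2 = 1 := by
    rw [← pow_mul]
    refine orderOf_dvd_iff_pow_eq_one.mp ?_
    rw [hα', pow_succ]
    exact mul_dvd_mul_right h2w 2
  have hβ1 : α ^ (r + 1) ≠ 1 := fun h => hnd (hα' ▸ orderOf_dvd_iff_pow_eq_one.mpr h)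
  have hβval : ((α : F)) ^ (r + 1) = -1 := by
    have h2 : ((α : F) ^ (r + 1)) * ((α : F) ^ (r + 1)) = 1 := by
      have h3 : ((α ^ (r + 1) : Fˣ) : F) * ((α ^ (r + 1) : Fˣ) : F) = 1 := by
        rw [← Units.val_mul, ← sq, hβ2, Units.val_one]
      simpa [Units.val_pow_eq_pow_val] using h3
    rcases mul_self_eq_one_iff.mp h2 with h | h
    · exact absurd (Units.ext (by simpa [Units.val_pow_eq_pow_val] using h)) hβ1
    · exact h
  have hneg : σ (α : F) * (α : F) = -1 := by rw [hσ, ← pow_succ]; exact hβval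
  have hσσ : ∀ x, σ (σ x) = x := fun x => by
    rw [hσ, hσ, ← pow_mul, show r * r = Fintype.card F by rw [hcard, pow_two]]
    exact FiniteField.pow_card x
  have h2ne : (2 : F) ≠ 0 := by
    intro h
    have hne : (-1 : F) = 1 := by linear_combination -h
    exact hβ1 (Units.ext (by simp [Units.val_pow_eq_pow_val, hβval, hne]))
  -- Group theory
  set D := diagI F i hi with hDdef
  have hsq : ∀ A : SL(2, F), Phi σ α (Phi σ α A) = D * A * D⁻¹ := Phi_sq σ α hσσ hneg i hi
  have hker : Subgroup.center (SL(2, F)) ≤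
      ((QuotientGroup.mk' (Subgroup.center (SL(2, F)))).comp (Phi σ α)).ker := by
    intro x hx
    simp only [MonoidHom.mem_ker, MonoidHom.comp_apply, QuotientGroup.mk'_apply]
    exact (QuotientGroup.eq_one_iff _).mpr (Phi_center σ α x hx)
  set ψ := QuotientGroup.lift _ ((QuotientGroup.mk' _).comp (Phi σ α)) hker with hψdef
  have hψmk : ∀ A : SL(2, F), ψ (QuotientGroup.mk A) = QuotientGroup.mk (Phi σ α A) :=
    fun A => rfl
  have hDD : ∀ A : SL(2, F), (D * D) * A = A * (D * D) := by
    intro A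
    have hD2 : ((D * D : SL(2, F)) : Matrix (Fin 2) (Fin 2) F) = -1 := by
      rw [Matrix.SpecialLinearGroup.coe_mul]
      show (!![i, 0; 0, -i] : Matrix (Fin 2) (Fin 2) F) * !![i, 0; 0, -i] = -1
      ext a b
      fin_cases a <;> fin_cases b <;>
        simp [Matrix.mul_fin_two, Matrix.one_fin_two, hi]
    apply Subtype.ext
    rw [Matrix.SpecialLinearGroup.coe_mul (D * D) A, Matrix.SpecialLinearGroup.coe_mul A (D * D),
      hD2, neg_one_mul, mul_neg_one]
  have h4 : ∀ A : SL(2, F), Phi σ α (Phi σ α (Phi σ α (Phi σ α A))) = A := by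
    intro A
    rw [hsq A, hsq (D * A * D⁻¹)]
    calc D * (D * A * D⁻¹) * D⁻¹ = (D * D) * A * (D * D)⁻¹ := by group
      _ = A := by rw [hDD A, mul_inv_cancel_right]
  have hψ4 : ∀ x, ψ (ψ (ψ (ψ x))) = x := by
    intro x
    refine QuotientGroup.induction_on x fun A => ?_
    rw [hψmk, hψmk, hψmk, hψmk, h4]
  let e : MulAut (Matrix.ProjectiveSpecialLinearGroup (Fin 2) F) :=
    { toFun := ψ
      invFun := fun x => ψ (ψ (ψ x))
      left_inv := fun x => hψ4 x
      right_inv := fun x => hψ4 x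
      map_mul' := fun a b => map_mul ψ a b }
  have hemk : ∀ A : SL(2, F), e (QuotientGroup.mk A) = QuotientGroup.mk (Phi σ α A) :=
    fun A => hψmk A
  have hee : ∀ x, (e * e) x = (QuotientGroup.mk D) * x * (QuotientGroup.mk D)⁻¹ := by
    intro x
    refine QuotientGroup.induction_on x fun A => ?_
    rw [MulAut.mul_apply, hemk, hemk, hsq A]
    simp [QuotientGroup.mk_mul, QuotientGroup.mk_inv]
  have he4 : e ^ 4 = 1 := by
    ext x
    show (e ^ 4) x = x
    have h : (e ^ 4) x = e (e (e (e x))) := by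
      simp [pow_succ, MulAut.mul_apply]
    rw [h]
    exact hψ4 x
  have heene : e * e ≠ 1 := by
    intro h
    have hdet0 : (!![(1:F), 1; 0, 1]).det = 1 := by simp [Matrix.det_fin_two_of]
    set A0 : SL(2, F) := ⟨!![(1:F), 1; 0, 1], hdet0⟩ with hA0
    have hthis := hee (QuotientGroup.mk A0)
    rw [h, MulAut.one_apply] at hthis
    have h1 : (QuotientGroup.mk (D * A0 * D⁻¹) :
        Matrix.ProjectiveSpecialLinearGroup (Fin 2) F) = QuotientGroup.mk A0 := by
      calc (QuotientGroup.mk (D * A0 * D⁻¹) : Matrix.ProjectiveSpecialLinearGroup (Fin 2) F)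
          = QuotientGroup.mk D * QuotientGroup.mk A0 * (QuotientGroup.mk D)⁻¹ := by
            rw [QuotientGroup.mk_mul, QuotientGroup.mk_mul, QuotientGroup.mk_inv]
        _ = QuotientGroup.mk A0 := hthis.symm
    have h2 : A0⁻¹ * (D * A0 * D⁻¹) ∈ Subgroup.center (SL(2, F)) := by
      rw [← QuotientGroup.eq_one_iff]
      rw [QuotientGroup.mk_mul, QuotientGroup.mk_inv, h1, inv_mul_cancel]
    obtain ⟨t, ht, hts⟩ := Matrix.SpecialLinearGroup.mem_center_iff.mp h2
    have hts2 : Matrix.scalar (Fin 2) t = !![(1:F), -2; 0, 1] := by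
      rw [hts]
      simp only [Matrix.SpecialLinearGroup.coe_mul, Matrix.SpecialLinearGroup.coe_inv]
      show adjugate !![(1:F), 1; 0, 1] * (!![i, 0; 0, -i] * !![(1:F), 1; 0, 1]
        * adjugate !![i, 0; 0, -i]) = _
      rw [Matrix.adjugate_fin_two, Matrix.adjugate_fin_two]
      ext a b
      fin_cases a <;> fin_cases b <;>
        simp [Matrix.mul_fin_two] <;>
        first
        | linear_combination hi
        | linear_combination (-2 : F) * hi
        | linear_combination (2 : F) * hi
        | linear_combination -hi
    have hent := congr_fun (congr_fun hts2 0) 1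
    simp [Matrix.scalar_apply, Matrix.diagonal_apply_ne] at hent
    exact h2ne hent
  refine ⟨e, fun A => hemk A, ?_, hee⟩
  have hd : orderOf e ∣ 4 := orderOf_dvd_of_pow_eq_one he4
  have hnd2 : ¬ orderOf e ∣ 2 := fun h => heene (by
    have h2 := orderOf_dvd_iff_pow_eq_one.mp h
    rwa [pow_two] at h2)
  obtain ⟨n, hn⟩ : ∃ n, orderOf e = n := ⟨_, rfl⟩
  rw [hn] at hd hnd2 ⊢
  have h4' := Nat.le_of_dvd (by norm_num) hd
  interval_cases n <;> revert hd hnd2 <;> decide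
end
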